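/- The linear map e is Dic∞-equivariant and satisfies: (1) e ∘ coev = 0 and ev ∘ e = 0; (2) e ∘ e = −2·e; (3) (id ⊗ ev) ∘ (e ⊗ id) ∘ (id ⊗ coev) = id_{ℂ²}; and (4) (ev ⊗ id) ∘ (id ⊗ e) ∘ (coev ⊗ id) = id_{ℂ²}. -/
import Mathlib


open scoped TensorProduct
open Matrix

noncomputable section

/-- `ℂ²`, the standard two-dimensional complex vector space. -/
abbrev V2 : Type := Fin 2 → ℂ

/-- The standard representation of a subgroup `G ≤ GL₂(ℂ)` on `ℂ²`, by matrix-vector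
multiplication. -/
def stdRep (G : Subgroup (GL (Fin 2) ℂ)) : Representation ℂ G V2 where
  toFun g := Matrix.toLin' ((g : GL (Fin 2) ℂ) : Matrix (Fin 2) (Fin 2) ℂ)
  map_one' := by
    simp only [OneMemClass.coe_one, Units.val_one, Matrix.toLin'_one]
    rfl
  map_mul' g h := by
    simp only [MulMemClass.coe_mul, Units.val_mul, Matrix.toLin'_mul]
    rfl

/-- The standard basis vectors `v₁ = bv 0`, `v₂ = bv 1` of `ℂ²`. -/
def bv (s : Fin 2) : V2 := Pi.single s 1

/-- The evaluation map `ev : ℂ²⊗ℂ² → ℂ`, determined by `ev(v₁⊗v₁) = ev(v₂⊗v₂) = 0`,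
`ev(v₁⊗v₂) = 1` and `ev(v₂⊗v₁) = −1`. -/
def evMap : (V2 ⊗[ℂ] V2) →ₗ[ℂ] ℂ :=
  TensorProduct.lift
    (LinearMap.mk₂ ℂ (fun v w => v 0 * w 1 - v 1 * w 0)
      (fun m₁ m₂ n => by simp only [Pi.add_apply]; ring)
      (fun c m n => by simp only [Pi.smul_apply, smul_eq_mul]; ring)
      (fun m n₁ n₂ => by simp only [Pi.add_apply]; ring)
      (fun c m n => by simp only [Pi.smul_apply, smul_eq_mul]; ring))

/-- The coevaluation map `coev : ℂ → ℂ²⊗ℂ²`, `1 ↦ v₂⊗v₁ − v₁⊗v₂`. -/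
def coevMap : ℂ →ₗ[ℂ] (V2 ⊗[ℂ] V2) :=
  LinearMap.toSpanSingleton ℂ (V2 ⊗[ℂ] V2) (bv 1 ⊗ₜ[ℂ] bv 0 - bv 0 ⊗ₜ[ℂ] bv 1)

/-- The map `e : ℂ²⊗ℂ² → ℂ²⊗ℂ²` with `e(v₁⊗v₁) = e(v₂⊗v₂) = 0` and
`e(v₁⊗v₂) = e(v₂⊗v₁) = −(v₁⊗v₂ + v₂⊗v₁)`. -/
def eMap : (V2 ⊗[ℂ] V2) →ₗ[ℂ] (V2 ⊗[ℂ] V2) :=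
  TensorProduct.lift
    (LinearMap.mk₂ ℂ
      (fun v w => (-(v 0 * w 1 + v 1 * w 0)) • (bv 0 ⊗ₜ[ℂ] bv 1 + bv 1 ⊗ₜ[ℂ] bv 0))
      (fun m₁ m₂ n => by
        simp only [Pi.add_apply]
        rw [← add_smul]; ring_nf)
      (fun c m n => by
        simp only [Pi.smul_apply, smul_eq_mul]
        rw [smul_smul]; ring_nf)
      (fun m n₁ n₂ => by
        simp only [Pi.add_apply]
        rw [← add_smul]; ring_nf)
      (fun c m n => by
        simp only [Pi.smul_apply, smul_eq_mul]
        rw [smul_smul]; ring_nf))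


-- Auxiliary lemmas --------------------------------------------------------

lemma eMap_tmul (v w : V2) :
    eMap (v ⊗ₜ[ℂ] w) = (-(v 0 * w 1 + v 1 * w 0)) • (bv 0 ⊗ₜ[ℂ] bv 1 + bv 1 ⊗ₜ[ℂ] bv 0) := rfl

lemma evMap_tmul (v w : V2) : evMap (v ⊗ₜ[ℂ] w) = v 0 * w 1 - v 1 * w 0 := rfl

@[simp] lemma bv00 : bv 0 0 = 1 := rfl
@[simp] lemma bv01 : bv 0 1 = 0 := rfl
@[simp] lemma bv10 : bv 1 0 = 0 := rfl
@[simp] lemma bv11 : bv 1 1 = 1 := rfl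

lemma vdecomp (v : V2) : v = v 0 • bv 0 + v 1 • bv 1 := by
  funext i; fin_cases i <;> simp [bv]

/-- The diagonal action of a matrix on `V2 ⊗ V2`. -/
abbrev TT (M : Matrix (Fin 2) (Fin 2) ℂ) : (V2 ⊗[ℂ] V2) →ₗ[ℂ] (V2 ⊗[ℂ] V2) :=
  TensorProduct.map (Matrix.toLin' M) (Matrix.toLin' M)

lemma TT_mul (M N : Matrix (Fin 2) (Fin 2) ℂ) : TT (M * N) = TT M ∘ₗ TT N := by
  rw [TT, Matrix.toLin'_mul, TensorProduct.map_comp]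

lemma TT_one : TT 1 = LinearMap.id := by
  rw [TT, Matrix.toLin'_one, TensorProduct.map_id]

lemma toLin'_apply' (M : Matrix (Fin 2) (Fin 2) ℂ) (v : V2) (i : Fin 2) :
    Matrix.toLin' M v i = M i 0 * v 0 + M i 1 * v 1 := by
  simp [Matrix.toLin'_apply, Matrix.mulVec, dotProduct, Fin.sum_univ_two]

lemma toLin'_bv (M : Matrix (Fin 2) (Fin 2) ℂ) (j : Fin 2) :
    Matrix.toLin' M (bv j) = M 0 j • bv 0 + M 1 j • bv 1 := by
  funext i
  fin_cases i <;> fin_cases j <;> simp [toLin'_apply', bv]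

lemma commX (X : GL (Fin 2) ℂ) (hX : (X : Matrix (Fin 2) (Fin 2) ℂ) = !![0, -1; 1, 0]) :
    eMap ∘ₗ TT (X : Matrix (Fin 2) (Fin 2) ℂ) = TT (X : Matrix (Fin 2) (Fin 2) ℂ) ∘ₗ eMap := by
  apply TensorProduct.ext'
  intro v w
  simp only [LinearMap.comp_apply, TT, TensorProduct.map_tmul, eMap_tmul, map_add,
    _root_.map_smul, toLin'_bv, toLin'_apply', hX,
    TensorProduct.add_tmul, TensorProduct.tmul_add, TensorProduct.smul_tmul',
    TensorProduct.tmul_smul, smul_smul, smul_add]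
  simp
  module

lemma commA (θ : ℝ) (A : GL (Fin 2) ℂ)
    (hA : (A : Matrix (Fin 2) (Fin 2) ℂ) =
      !![Complex.exp (θ * Complex.I), 0; 0, Complex.exp (-(θ * Complex.I))]) :
    eMap ∘ₗ TT (A : Matrix (Fin 2) (Fin 2) ℂ) = TT (A : Matrix (Fin 2) (Fin 2) ℂ) ∘ₗ eMap := by
  apply TensorProduct.ext'
  intro v w
  simp only [LinearMap.comp_apply, TT, TensorProduct.map_tmul, eMap_tmul, map_add,
    _root_.map_smul, toLin'_bv, toLin'_apply', hA,
    TensorProduct.add_tmul, TensorProduct.tmul_add, TensorProduct.smul_tmul',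
    TensorProduct.tmul_smul, smul_smul, smul_add]
  simp only [← TensorProduct.smul_tmul', TensorProduct.tmul_smul, smul_smul]
  simp
  match_scalars <;> ring

lemma comm_closure (X A : GL (Fin 2) ℂ)
    (hX' : eMap ∘ₗ TT (X : Matrix (Fin 2) (Fin 2) ℂ) = TT (X : Matrix (Fin 2) (Fin 2) ℂ) ∘ₗ eMap)
    (hA' : eMap ∘ₗ TT (A : Matrix (Fin 2) (Fin 2) ℂ) = TT (A : Matrix (Fin 2) (Fin 2) ℂ) ∘ₗ eMap)
    {g : GL (Fin 2) ℂ} (hg : g ∈ Subgroup.closure {X, A}) :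
    eMap ∘ₗ TT (g : Matrix (Fin 2) (Fin 2) ℂ) = TT (g : Matrix (Fin 2) (Fin 2) ℂ) ∘ₗ eMap := by
  induction hg using Subgroup.closure_induction with
  | mem x hx =>
    rcases hx with rfl | rfl
    · exact hX'
    · exact hA'
  | one => simp [Units.val_one, TT_one]
  | mul x y hx hy ihx ihy =>
    rw [Units.val_mul, TT_mul, ← LinearMap.comp_assoc, ihx, LinearMap.comp_assoc, ihy,
      LinearMap.comp_assoc]
  | inv x hx ih =>
    have h1 : ∀ z, TT ((x : Matrix (Fin 2) (Fin 2) ℂ))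
        (TT ((x⁻¹ : GL (Fin 2) ℂ) : Matrix (Fin 2) (Fin 2) ℂ) z) = z := by
      intro z
      rw [← LinearMap.comp_apply, ← TT_mul, ← Units.val_mul, mul_inv_cancel, Units.val_one,
        TT_one, LinearMap.id_apply]
    have h2 : ∀ z, TT ((x⁻¹ : GL (Fin 2) ℂ) : Matrix (Fin 2) (Fin 2) ℂ)
        (TT ((x : Matrix (Fin 2) (Fin 2) ℂ)) z) = z := by
      intro z
      rw [← LinearMap.comp_apply, ← TT_mul, ← Units.val_mul, inv_mul_cancel, Units.val_one,
        TT_one, LinearMap.id_apply]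
    apply LinearMap.ext
    intro z
    have h := LinearMap.congr_fun ih (TT ((x⁻¹ : GL (Fin 2) ℂ) : Matrix (Fin 2) (Fin 2) ℂ) z)
    simp only [LinearMap.comp_apply, h1] at h
    rw [LinearMap.comp_apply, LinearMap.comp_apply, h, h2]

set_option maxHeartbeats 1000000 in
set_option synthInstance.maxHeartbeats 1000000 in
/-- The map `e` is `Dic∞`-equivariant and satisfies: (1) `e ∘ coev = 0` and `ev ∘ e = 0`;
(2) `e ∘ e = −2·e`; (3) `(id ⊗ ev) ∘ (e ⊗ id) ∘ (id ⊗ coev) = id`; and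
(4) `(ev ⊗ id) ∘ (id ⊗ e) ∘ (coev ⊗ id) = id`. -/
theorem eMap_relations
    (θ : ℝ) (hθ : Irrational (θ / Real.pi)) (X A : GL (Fin 2) ℂ)
    (hX : (X : Matrix (Fin 2) (Fin 2) ℂ) = !![0, -1; 1, 0])
    (hA : (A : Matrix (Fin 2) (Fin 2) ℂ) =
      !![Complex.exp (θ * Complex.I), 0; 0, Complex.exp (-(θ * Complex.I))])
    (G : Subgroup (GL (Fin 2) ℂ)) (hG : G = Subgroup.closure {X, A}) :
    -- `e` is `Dic∞`-equivariant:
    (∀ (g : G) (z : V2 ⊗[ℂ] V2),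
      eMap (((stdRep G).tprod (stdRep G)) g z) = ((stdRep G).tprod (stdRep G)) g (eMap z)) ∧
    -- (1)
    (eMap ∘ₗ coevMap = 0 ∧ evMap ∘ₗ eMap = 0) ∧
    -- (2)
    (eMap ∘ₗ eMap = (-2 : ℂ) • eMap) ∧
    -- (3)
    ((TensorProduct.rid ℂ V2).toLinearMap ∘ₗ
        TensorProduct.map LinearMap.id evMap ∘ₗ
        (TensorProduct.assoc ℂ V2 V2 V2).toLinearMap ∘ₗ
        TensorProduct.map eMap LinearMap.id ∘ₗ
        (TensorProduct.assoc ℂ V2 V2 V2).symm.toLinearMap ∘ₗ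
        TensorProduct.map LinearMap.id coevMap ∘ₗ
        (TensorProduct.rid ℂ V2).symm.toLinearMap = LinearMap.id) ∧
    -- (4)
    ((TensorProduct.lid ℂ V2).toLinearMap ∘ₗ
        TensorProduct.map evMap LinearMap.id ∘ₗ
        (TensorProduct.assoc ℂ V2 V2 V2).symm.toLinearMap ∘ₗ
        TensorProduct.map LinearMap.id eMap ∘ₗ
        (TensorProduct.assoc ℂ V2 V2 V2).toLinearMap ∘ₗ
        TensorProduct.map coevMap LinearMap.id ∘ₗ
        (TensorProduct.lid ℂ V2).symm.toLinearMap = LinearMap.id) := by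
  subst hG
  refine ⟨?_, ⟨?_, ?_⟩, ?_, ?_, ?_⟩
  · -- equivariance
    intro g z
    have h := comm_closure X A (commX X hX) (commA θ A hA) g.2
    have := LinearMap.congr_fun h z
    simpa [stdRep, Representation.tprod_apply, LinearMap.comp_apply] using this
  · -- e ∘ coev = 0
    apply LinearMap.ext_ring
    simp [coevMap, eMap_tmul]
  · -- ev ∘ e = 0
    apply TensorProduct.ext'
    intro v w
    simp only [LinearMap.comp_apply, eMap_tmul, _root_.map_smul, map_add, evMap_tmul,
      LinearMap.zero_apply]
    simp
  · -- e ∘ e = -2 e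
    apply TensorProduct.ext'
    intro v w
    simp only [LinearMap.comp_apply, eMap_tmul, _root_.map_smul, map_add, LinearMap.smul_apply,
      smul_smul]
    simp only [bv00, bv01, bv10, bv11]
    module
  · -- (3)
    apply LinearMap.ext
    intro v
    simp only [LinearMap.comp_apply, LinearEquiv.coe_coe, TensorProduct.rid_symm_apply,
      TensorProduct.map_tmul, LinearMap.id_apply, coevMap, LinearMap.toSpanSingleton_apply,
      one_smul, TensorProduct.tmul_sub, map_sub, TensorProduct.assoc_symm_tmul,
      TensorProduct.assoc_tmul, eMap_tmul, TensorProduct.smul_tmul', _root_.map_smul,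
      TensorProduct.add_tmul, map_add, evMap_tmul, TensorProduct.tmul_smul,
      TensorProduct.rid_tmul]
    simp only [← TensorProduct.smul_tmul', ← TensorProduct.tmul_smul, _root_.map_smul,
      TensorProduct.add_tmul, TensorProduct.tmul_add, map_add, TensorProduct.assoc_tmul,
      TensorProduct.assoc_symm_tmul, TensorProduct.map_tmul, LinearMap.id_apply, evMap_tmul,
      TensorProduct.rid_tmul, TensorProduct.lid_tmul]
    simp only [bv00, bv01, bv10, bv11, mul_one, mul_zero, one_mul, zero_mul]
    conv_rhs => rw [vdecomp v]
    module
  · -- (4)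
    apply LinearMap.ext
    intro v
    simp only [LinearMap.comp_apply, LinearEquiv.coe_coe, TensorProduct.lid_symm_apply,
      TensorProduct.map_tmul, LinearMap.id_apply, coevMap, LinearMap.toSpanSingleton_apply,
      one_smul, TensorProduct.sub_tmul, map_sub, TensorProduct.assoc_symm_tmul,
      TensorProduct.assoc_tmul, eMap_tmul, TensorProduct.smul_tmul', _root_.map_smul,
      TensorProduct.add_tmul, TensorProduct.tmul_add, map_add, evMap_tmul,
      TensorProduct.tmul_smul, TensorProduct.lid_tmul]
    simp only [bv00, bv01, bv10, bv11, mul_one, mul_zero, one_mul, zero_mul]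
    conv_rhs => rw [vdecomp v]
    module
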